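/- arXiv:0806.0044 — 5 statements merged into one kernel-verified Lean document; each statement's English description precedes it below -/
import Mathlib

section
/- Let p be a prime, q a power of p, P an irreducible monic polynomial of degree d over 𝔽_q, and let F = 𝔽_q[T]/(P) be its residue field. Then the trace from F to 𝔽_q of the class of T^k / P'(T) equals 0 for 0 ≤ k ≤ d−2 and equals 1 for k = d−1. -/
open Polynomial

lemma trace_aux (Fq : Type) [Field Fq] [Finite Fq]
    (P : Polynomial Fq) [hirr : Fact (Irreducible P)] (hmonic : P.Monic)
    (j : ℕ) (hj : j < P.natDegree) :
    Algebra.trace Fq (AdjoinRoot P)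
        (AdjoinRoot.mk P (X ^ j) * (AdjoinRoot.mk P (derivative P))⁻¹) =
      if j = P.natDegree - 1 then 1 else 0 := by
  have hP0 : P ≠ 0 := hirr.out.ne_zero
  let pb := AdjoinRoot.powerBasis hP0
  haveI : FiniteDimensional Fq (AdjoinRoot P) := pb.finite
  haveI : Algebra.IsSeparable Fq (AdjoinRoot P) := inferInstance
  have hmin : minpoly Fq pb.gen = P := by
    rw [AdjoinRoot.powerBasis_gen, AdjoinRoot.minpoly_root hP0, hmonic.leadingCoeff, inv_one,
      map_one, mul_one]
  have hdim : pb.dim = P.natDegree := AdjoinRoot.powerBasis_dim hP0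
  have hdpos : 0 < P.natDegree := by omega
  set i : Fin pb.dim := ⟨P.natDegree - 1, by omega⟩
  set jj : Fin pb.dim := ⟨j, by omega⟩
  have key := LinearMap.BilinForm.apply_dualBasis_left (B := Algebra.traceForm Fq (AdjoinRoot P))
    (traceForm_nondegenerate Fq (AdjoinRoot P)) (b := pb.basis) i jj
  rw [← Module.Basis.traceDual_def, Module.Basis.traceDual_powerBasis_eq] at key
  have hcoeff : (minpolyDiv Fq pb.gen).coeff (P.natDegree - 1) = 1 := by
    have hdeg : (minpolyDiv Fq pb.gen).natDegree = P.natDegree - 1 := by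
      rw [natDegree_minpolyDiv, hmin]
    rw [← hdeg]
    exact (minpolyDiv_monic (minpoly.ne_zero_iff.mp (by rw [hmin]; exact hP0))).coeff_natDegree
  have haev : aeval pb.gen (derivative (minpoly Fq pb.gen)) = AdjoinRoot.mk P (derivative P) := by
    rw [hmin, AdjoinRoot.powerBasis_gen, AdjoinRoot.aeval_eq]
  have hbasis : pb.basis jj = AdjoinRoot.mk P (X ^ j) := by
    rw [pb.basis_eq_pow, AdjoinRoot.powerBasis_gen, map_pow, AdjoinRoot.mk_X]
  rw [show (i : ℕ) = P.natDegree - 1 from rfl] at key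
  rw [hcoeff, haev, hbasis, one_div] at key
  rw [Algebra.traceForm_apply] at key
  rw [mul_comm, key]
  simp only [i, jj, Fin.mk.injEq]

/-- Lemma 2.3: let `P` be an irreducible monic polynomial of degree `d` over `𝔽_q`
(`q` a power of the prime `p`), and `F = 𝔽_q[T]/(P)` its residue field. Then the trace
from `F` to `𝔽_q` of the class of `T^k / P'(T)` is `0` for `0 ≤ k ≤ d − 2` and `1`
for `k = d − 1`. -/
theorem stmt1 (p q e : ℕ) (hp : p.Prime) (he : 0 < e) (hq : q = p ^ e)
    (Fq : Type) [Field Fq] [Fintype Fq] (hcard : Fintype.card Fq = q)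
    (P : Polynomial Fq) [hirr : Fact (Irreducible P)] (hmonic : P.Monic)
    (d : ℕ) (hd : P.natDegree = d) :
    (∀ k : ℕ, k + 2 ≤ d →
      Algebra.trace Fq (AdjoinRoot P)
        (AdjoinRoot.mk P (X ^ k) * (AdjoinRoot.mk P (derivative P))⁻¹) = 0) ∧
    Algebra.trace Fq (AdjoinRoot P)
        (AdjoinRoot.mk P (X ^ (d - 1)) * (AdjoinRoot.mk P (derivative P))⁻¹) = 1 := by
  subst hd
  constructor
  · intro k hk
    rw [trace_aux Fq P hmonic k (by omega)]
    simp [show k ≠ P.natDegree - 1 by omega]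
  · rw [trace_aux Fq P hmonic (P.natDegree - 1) (by
      have : 0 < P.natDegree := hirr.out.natDegree_pos
      omega)]
    simp
end

section
/- Let C be a smooth projective curve of genus g over 𝔽_q, and suppose there exist complex numbers ω_1, …, ω_{2g} such that for all n ≥ 1, |C(𝔽_{q^n})| = q^n + 1 − ∑_{ν=1}^{2g} ω_ν^n, with the ω_ν invariant (as a multiset) under ω ↦ q/ω. If for every ε > 0 there exist a positive integer m and a constant B such that ||C(𝔽_{q^{nm}})| − q^{nm} − 1| ≤ B q^{nm(1/2+ε)} for all n ≥ 1, then |ω_ν| = √q for every ν. -/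
open Filter Finset Topology


open Filter Finset Topology

lemma geom_partial_bound (u : ℂ) (hu1 : ‖u‖ ≤ 1) (hne : u ≠ 1) (N : ℕ) :
    ‖∑ n ∈ Finset.range N, u ^ (n + 1)‖ ≤ 2 / ‖1 - u‖ := by
  have h1 : u - 1 ≠ 0 := sub_ne_zero.mpr hne
  have heq : ∑ n ∈ Finset.range N, u ^ (n + 1) = u * ((u ^ N - 1) / (u - 1)) := by
    rw [← geom_sum_eq hne, Finset.mul_sum]
    exact Finset.sum_congr rfl fun n _ => by rw [pow_succ']
  rw [heq, norm_mul, norm_div]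
  have h2 : ‖u ^ N - 1‖ ≤ 2 := by
    calc ‖u ^ N - 1‖ ≤ ‖u ^ N‖ + ‖(1 : ℂ)‖ := norm_sub_le _ _
    _ ≤ 1 + 1 := by
        rw [norm_pow, norm_one]
        gcongr
        exact pow_le_one₀ (norm_nonneg u) hu1
    _ = 2 := by norm_num
  have h3 : ‖u - 1‖ = ‖1 - u‖ := by rw [← norm_neg]; ring_nf
  rw [h3]
  have h4 : 0 < ‖(1 : ℂ) - u‖ := by rw [← h3]; exact norm_pos_iff.mpr h1
  calc ‖u‖ * (‖u ^ N - 1‖ / ‖1 - u‖) ≤ 1 * (2 / ‖1 - u‖) := by gcongr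
  _ = 2 / ‖1 - u‖ := one_mul _

lemma power_sum_bound {M : ℕ} (a : Fin M → ℂ) (B ρ : ℝ) (hρ : 0 < ρ)
    (hb : ∀ n : ℕ, 1 ≤ n → ‖∑ ν, a ν ^ n‖ ≤ B * ρ ^ n) (ν : Fin M) :
    ‖a ν‖ ≤ ρ := by
  by_contra hlt
  push_neg at hlt
  obtain ⟨ν0, -, hmax⟩ := Finset.exists_max_image Finset.univ (fun ν => ‖a ν‖)
    ⟨ν, Finset.mem_univ ν⟩
  have hr : ρ < ‖a ν0‖ := lt_of_lt_of_le hlt (hmax ν (Finset.mem_univ ν))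
  have hr0 : (0:ℝ) < ‖a ν0‖ := hρ.trans hr
  have hv0 : a ν0 ≠ 0 := norm_pos_iff.mp hr0
  have hB : 0 ≤ B := by
    have h1 := hb 1 le_rfl
    nlinarith [norm_nonneg (∑ ν, a ν ^ 1), hρ]
  classical
  set V : Finset ℂ := Finset.image a Finset.univ with hV
  set c : ℂ → ℕ := fun v => #{ν ∈ Finset.univ | a ν = v} with hc
  have hgroup : ∀ n : ℕ, (∑ ν, a ν ^ n) = ∑ v ∈ V, c v • v ^ n := fun n =>
    Finset.sum_comp (fun z => z ^ n) a
  set A : ℕ → ℂ := fun N => (N : ℂ)⁻¹ * ∑ n ∈ Finset.range N,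
    (∑ ν, a ν ^ (n + 1)) / (a ν0) ^ (n + 1) with hA
  -- Limit 1 : A → 0
  have hlim0 : Tendsto A atTop (𝓝 0) := by
    have hx : (0:ℝ) ≤ ρ / ‖a ν0‖ := by positivity
    have hx1 : ρ / ‖a ν0‖ < 1 := (div_lt_one hr0).mpr hr
    set Cc : ℝ := B * (1 / (1 - ρ / ‖a ν0‖)) with hCc
    refine squeeze_zero_norm (a := fun N : ℕ => Cc / N) (fun N => ?_)
      (tendsto_const_div_atTop_nhds_zero_nat Cc)
    have hbound : ‖∑ n ∈ Finset.range N, (∑ ν, a ν ^ (n + 1)) / (a ν0) ^ (n + 1)‖ ≤ Cc := by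
      calc ‖∑ n ∈ Finset.range N, (∑ ν, a ν ^ (n + 1)) / (a ν0) ^ (n + 1)‖
          ≤ ∑ n ∈ Finset.range N, ‖(∑ ν, a ν ^ (n + 1)) / (a ν0) ^ (n + 1)‖ :=
            norm_sum_le _ _
        _ ≤ ∑ n ∈ Finset.range N, B * (ρ / ‖a ν0‖) ^ (n + 1) := by
            apply Finset.sum_le_sum
            intro n _
            rw [norm_div, norm_pow, div_le_iff₀ (by positivity)]
            calc ‖∑ ν, a ν ^ (n + 1)‖ ≤ B * ρ ^ (n + 1) := hb (n+1) (Nat.le_add_left 1 n)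
              _ = B * (ρ / ‖a ν0‖) ^ (n + 1) * ‖a ν0‖ ^ (n + 1) := by
                  rw [mul_assoc, ← mul_pow, div_mul_cancel₀ _ (ne_of_gt hr0)]
        _ ≤ ∑ n ∈ Finset.range N, B * (ρ / ‖a ν0‖) ^ n := by
            apply Finset.sum_le_sum
            intro n _
            exact mul_le_mul_of_nonneg_left
              (pow_le_pow_of_le_one hx hx1.le (Nat.le_succ n)) hB
        _ = B * ∑ n ∈ Finset.range N, (ρ / ‖a ν0‖) ^ n := by rw [Finset.mul_sum]
        _ ≤ Cc := by
            rw [hCc]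
            have h1 : (0:ℝ) < 1 - ρ / ‖a ν0‖ := by linarith
            have hgs : ∑ n ∈ Finset.range N, (ρ / ‖a ν0‖) ^ n ≤ 1 / (1 - ρ / ‖a ν0‖) := by
              rw [geom_sum_eq (by linarith : ρ / ‖a ν0‖ ≠ 1)]
              have heq2 : ((ρ / ‖a ν0‖) ^ N - 1) / (ρ / ‖a ν0‖ - 1)
                  = (1 - (ρ / ‖a ν0‖) ^ N) / (1 - ρ / ‖a ν0‖) := by
                rw [← neg_div_neg_eq]; ring_nf
              rw [heq2, div_le_div_iff₀ h1 h1]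
              nlinarith [pow_nonneg hx N]
            nlinarith
    rw [hA]
    simp only [norm_mul, norm_inv, Complex.norm_natCast]
    rcases Nat.eq_zero_or_pos N with h | h
    · subst h; simp
    · rw [div_eq_inv_mul]
      gcongr
  -- Limit 2 : A → c (a ν0)
  have hlim1 : Tendsto A atTop (𝓝 ((c (a ν0) : ℂ))) := by
    have hAeq : ∀ N : ℕ, A N = ∑ v ∈ V, (c v : ℂ) *
        ((N : ℂ)⁻¹ * ∑ n ∈ Finset.range N, (v / a ν0) ^ (n + 1)) := by
      intro N
      rw [hA]
      simp only [hgroup, Finset.sum_div, Finset.mul_sum]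
      rw [Finset.sum_comm]
      refine Finset.sum_congr rfl fun v _ => ?_
      refine Finset.sum_congr rfl fun n _ => ?_
      rw [div_pow, nsmul_eq_mul]
      push_cast
      ring
    have hterm : ∀ v ∈ V, Tendsto (fun N : ℕ => (c v : ℂ) *
        ((N : ℂ)⁻¹ * ∑ n ∈ Finset.range N, (v / a ν0) ^ (n + 1))) atTop
        (𝓝 (if v = a ν0 then (c (a ν0) : ℂ) else 0)) := by
      intro v hv
      by_cases hveq : v = a ν0
      · simp only [if_pos hveq, hveq]
        have hev : ∀ᶠ N : ℕ in atTop, (c (a ν0) : ℂ) *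
            ((N : ℂ)⁻¹ * ∑ n ∈ Finset.range N, (a ν0 / a ν0) ^ (n + 1)) = (c (a ν0) : ℂ) := by
          filter_upwards [eventually_ge_atTop 1] with N hN
          rw [div_self hv0]
          simp only [one_pow, Finset.sum_const, Finset.card_range, nsmul_eq_mul, mul_one]
          rw [inv_mul_cancel₀ (by exact_mod_cast Nat.one_le_iff_ne_zero.mp hN)]
          ring
        exact Tendsto.congr' (hev.mono fun N h => h.symm) tendsto_const_nhds
      · simp only [if_neg hveq]
        have hu1 : ‖v / a ν0‖ ≤ 1 := by
          rw [norm_div, div_le_one hr0]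
          obtain ⟨ν', -, rfl⟩ := Finset.mem_image.mp hv
          exact hmax ν' (Finset.mem_univ ν')
        have hune : v / a ν0 ≠ 1 := fun h => hveq (by field_simp at h; exact h)
        refine squeeze_zero_norm
          (a := fun N : ℕ => ((c v : ℝ) * (2 / ‖1 - v / a ν0‖)) / N) (fun N => ?_)
          (tendsto_const_div_atTop_nhds_zero_nat _)
        have hg := geom_partial_bound (v / a ν0) hu1 hune N
        calc ‖(c v : ℂ) * ((N : ℂ)⁻¹ * ∑ n ∈ Finset.range N, (v / a ν0) ^ (n + 1))‖
            = (c v : ℝ) * ((N : ℝ)⁻¹ * ‖∑ n ∈ Finset.range N, (v / a ν0) ^ (n + 1)‖) := by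
              rw [norm_mul, norm_mul, norm_inv, Complex.norm_natCast, Complex.norm_natCast]
          _ ≤ (c v : ℝ) * ((N : ℝ)⁻¹ * (2 / ‖1 - v / a ν0‖)) := by gcongr
          _ = ((c v : ℝ) * (2 / ‖1 - v / a ν0‖)) / N := by
              rw [div_eq_mul_inv]; ring
    have hsum := tendsto_finset_sum V hterm
    rw [Finset.sum_ite_eq' V (a ν0) (fun _ => (c (a ν0) : ℂ))] at hsum
    have hv0V : a ν0 ∈ V := Finset.mem_image.mpr ⟨ν0, Finset.mem_univ ν0, rfl⟩
    rw [if_pos hv0V] at hsum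
    exact Tendsto.congr (fun N => (hAeq N).symm) hsum
  have heq0 := tendsto_nhds_unique hlim1 hlim0
  have hc0 : c (a ν0) = 0 := by exact_mod_cast heq0
  have hmem : ν0 ∈ ({ν ∈ Finset.univ | a ν = a ν0} : Finset (Fin M)) := by simp
  rw [hc] at hc0
  rw [Finset.card_eq_zero.mp hc0] at hmem
  exact absurd hmem (Finset.notMem_empty ν0)

theorem stmt5' (q : ℕ) (hq : 1 < q) (M : ℕ)
    (ω : Fin M → ℂ) (hω : ∀ ν, ω ν ≠ 0)
    (hsym : ∃ σ : Equiv.Perm (Fin M), ∀ ν, ω (σ ν) = (q : ℂ) / ω ν)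
    (hbound : ∀ ε : ℝ, 0 < ε → ∃ m : ℕ, 0 < m ∧ ∃ B : ℝ, ∀ n : ℕ, 1 ≤ n →
      ‖∑ ν, ω ν ^ (n * m)‖ ≤ B * (q : ℝ) ^ (((n * m : ℕ) : ℝ) * (1 / 2 + ε))) :
    ∀ ν, ‖ω ν‖ = Real.sqrt q := by
  have hq0 : (0:ℝ) < q := by positivity
  have hq1 : (1:ℝ) < q := by exact_mod_cast hq
  -- upper bound
  have hupper : ∀ ν, ‖ω ν‖ ≤ Real.sqrt q := by
    intro ν
    have key : ∀ ε : ℝ, 0 < ε → ‖ω ν‖ ≤ (q : ℝ) ^ ((1:ℝ)/2 + ε) := by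
      intro ε hε
      obtain ⟨m, hm, B, hB⟩ := hbound ε hε
      set ρ : ℝ := (q : ℝ) ^ ((m : ℝ) * (1/2 + ε)) with hρ_def
      have hρ : 0 < ρ := Real.rpow_pos_of_pos hq0 _
      have hb : ∀ n : ℕ, 1 ≤ n → ‖∑ ν, (ω ν ^ m) ^ n‖ ≤ B * ρ ^ n := by
        intro n hn
        have h1 := hB n hn
        have h2 : ∀ ν', (ω ν' ^ m) ^ n = ω ν' ^ (n * m) := by
          intro ν'; rw [← pow_mul, Nat.mul_comm]
        calc ‖∑ ν, (ω ν ^ m) ^ n‖ = ‖∑ ν, ω ν ^ (n * m)‖ := by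
              congr 1; exact Finset.sum_congr rfl fun ν' _ => h2 ν'
          _ ≤ B * (q : ℝ) ^ (((n * m : ℕ) : ℝ) * (1 / 2 + ε)) := h1
          _ = B * ρ ^ n := by
              rw [hρ_def, ← Real.rpow_natCast ((q:ℝ) ^ ((m:ℝ) * (1/2+ε))) n,
                ← Real.rpow_mul hq0.le]
              congr 2
              push_cast
              ring
      have hle := power_sum_bound (fun ν => ω ν ^ m) B ρ hρ hb ν
      have hle2 : ‖ω ν‖ ^ m ≤ ((q : ℝ) ^ ((1:ℝ)/2 + ε)) ^ m := by
        rw [← norm_pow]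
        refine hle.trans (le_of_eq ?_)
        rw [← Real.rpow_natCast ((q:ℝ) ^ ((1:ℝ)/2 + ε)) m, ← Real.rpow_mul hq0.le]
        rw [hρ_def]
        ring_nf
      exact le_of_pow_le_pow_left₀ (by omega) (by positivity) hle2
    have htend : Tendsto (fun ε : ℝ => (q : ℝ) ^ ((1:ℝ)/2 + ε)) (𝓝[>] 0)
        (𝓝 ((q : ℝ) ^ ((1:ℝ)/2))) := by
      have hc : ContinuousAt (fun ε : ℝ => (q : ℝ) ^ ((1:ℝ)/2 + ε)) 0 := by
        have h1 : ContinuousAt ((q:ℝ) ^ ·) ((1:ℝ)/2 + 0) :=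
          Real.continuousAt_const_rpow (ne_of_gt hq0)
        have h2 : ContinuousAt (fun ε : ℝ => (1:ℝ)/2 + ε) 0 :=
          (continuous_const.add continuous_id).continuousAt
        simpa [Function.comp_def] using h1.comp h2
      have := hc.tendsto
      simp only [add_zero] at this
      exact this.mono_left nhdsWithin_le_nhds
    have hev : ∀ᶠ ε in 𝓝[>] (0:ℝ), ‖ω ν‖ ≤ (q : ℝ) ^ ((1:ℝ)/2 + ε) :=
      eventually_mem_nhdsWithin.mono fun ε hε => key ε hε
    have := ge_of_tendsto htend hev
    rwa [← Real.sqrt_eq_rpow] at this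
  intro ν
  obtain ⟨σ, hσ⟩ := hsym
  have h1 : ‖ω (σ ν)‖ = (q : ℝ) / ‖ω ν‖ := by
    rw [hσ ν, norm_div, Complex.norm_natCast]
  have h2 : ‖ω (σ ν)‖ ≤ Real.sqrt q := hupper (σ ν)
  have h3 : ‖ω ν‖ ≤ Real.sqrt q := hupper ν
  have hν0 : 0 < ‖ω ν‖ := norm_pos_iff.mpr (hω ν)
  have hsq : Real.sqrt q * Real.sqrt q = q := Real.mul_self_sqrt hq0.le
  have hsqpos : 0 < Real.sqrt q := Real.sqrt_pos.mpr hq0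
  have h4 : (q : ℝ) / ‖ω ν‖ ≤ Real.sqrt q := h1 ▸ h2
  rw [div_le_iff₀ hν0] at h4
  -- q ≤ sqrt q * ‖ω ν‖, so sqrt q ≤ ‖ω ν‖
  have h5 : Real.sqrt q ≤ ‖ω ν‖ := by
    nlinarith
  linarith



/-- An abstract interface for a smooth projective curve over the finite field `𝔽_q`:
`Point` is the set of closed points, `deg` the degree of a closed point, `g` the genus,
`prin` the subgroup of principal divisors (divisors are elements of `Point →₀ ℤ`),
`l D` the dimension of the Riemann–Roch space of the divisor `D`, `canonical` a canonical
divisor, and `N n = |C(𝔽_{q^n})|`.  The axioms are the Riemann–Roch theorem, `l(0) = 1`,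
that principal divisors have degree `0`, that `l(D) ≥ 1` iff `D` is linearly equivalent to
an effective divisor, and that `|C(𝔽_{q^n})| = ∑_{deg v ∣ n} deg v`. -/
structure SmoothProjCurve (q : ℕ) : Type 1 where
  Point : Type
  nonempty : Nonempty Point
  deg : Point → ℕ
  deg_pos : ∀ v, 0 < deg v
  finite_deg : ∀ d : ℕ, {v : Point | deg v = d}.Finite
  g : ℕ
  prin : AddSubgroup (Point →₀ ℤ)
  l : (Point →₀ ℤ) → ℕ
  canonical : Point →₀ ℤ
  riemann_roch : ∀ D : Point →₀ ℤ,
    (l D : ℤ) = D.sum (fun v k => k * (deg v : ℤ)) + 1 - (g : ℤ) + l (canonical - D)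
  l_zero : l 0 = 1
  deg_prin : ∀ D ∈ prin, D.sum (fun v k => k * (deg v : ℤ)) = 0
  l_pos_iff : ∀ D : Point →₀ ℤ,
    1 ≤ l D ↔ ∃ f ∈ prin, ∀ v, 0 ≤ f v + D v
  N : ℕ → ℕ
  N_eq : ∀ n : ℕ, 0 < n → N n = ∑ᶠ (v : Point) (_ : deg v ∣ n), deg v

/-- The degree of a divisor `D = ∑ D_v ⬝ v`, namely `∑ D_v deg v`. -/
def SmoothProjCurve.degDiv {q : ℕ} (C : SmoothProjCurve q) (D : C.Point →₀ ℤ) : ℤ :=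
  D.sum fun v k => k * (C.deg v : ℤ)

/-- Lemma 3.1: if the point counts of the curve satisfy
`|C(𝔽_{q^n})| = q^n + 1 − ∑_ν ω_ν^n` with the `ω_ν` (as a multiset) invariant under
`ω ↦ q/ω`, and if for every `ε > 0` there are `m` and `B` with
`||C(𝔽_{q^{nm}})| − q^{nm} − 1| ≤ B q^{nm(1/2+ε)}` for all `n ≥ 1`, then `|ω_ν| = √q`
for every `ν` (the Riemann hypothesis for `C`). -/
theorem stmt5 (q : ℕ) (hq : 1 < q) (C : SmoothProjCurve q)
    (ω : Fin (2 * C.g) → ℂ) (hω : ∀ ν, ω ν ≠ 0)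
    (hformula : ∀ n : ℕ, 1 ≤ n → (C.N n : ℂ) = (q : ℂ) ^ n + 1 - ∑ ν, ω ν ^ n)
    (hsym : ∃ σ : Equiv.Perm (Fin (2 * C.g)), ∀ ν, ω (σ ν) = (q : ℂ) / ω ν)
    (hbound : ∀ ε : ℝ, 0 < ε → ∃ m : ℕ, 0 < m ∧ ∃ B : ℝ, ∀ n : ℕ, 1 ≤ n →
      |(C.N (n * m) : ℝ) - (q : ℝ) ^ (n * m) - 1| ≤
        B * (q : ℝ) ^ (((n * m : ℕ) : ℝ) * (1 / 2 + ε))) :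
    ∀ ν, ‖ω ν‖ = Real.sqrt q := by
  intro ν
  refine stmt5' q hq (2 * C.g) ω hω hsym ?_ ν
  intro ε hε
  obtain ⟨m, hm, B, hB⟩ := hbound ε hε
  refine ⟨m, hm, B, fun n hn => ?_⟩
  have hnm : 1 ≤ n * m := Nat.one_le_iff_ne_zero.mpr (Nat.mul_ne_zero (by omega) (by omega))
  have hf := hformula (n * m) hnm
  have hs : ∑ ν, ω ν ^ (n * m) = (q : ℂ) ^ (n * m) + 1 - (C.N (n * m) : ℂ) := by
    rw [hf]; ring
  rw [hs]
  have hcast : ((q : ℂ) ^ (n * m) + 1 - (C.N (n * m) : ℂ))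
      = (((q : ℝ) ^ (n * m) + 1 - (C.N (n * m) : ℝ) : ℝ) : ℂ) := by push_cast; ring
  rw [hcast, Complex.norm_real, Real.norm_eq_abs]
  have hB' := hB n hn
  rw [show (q : ℝ) ^ (n * m) + 1 - (C.N (n * m) : ℝ)
      = -((C.N (n * m) : ℝ) - (q : ℝ) ^ (n * m) - 1) by ring, abs_neg]
  exact hB'
end

section
/- Let ω_1, …, ω_{2g} be nonzero complex numbers and suppose that for every ε > 0 and all sufficiently large n, |∑_{ν=1}^{2g} ω_ν^n| ≤ B q^{n(1/2+ε)}. Then |ω_ν| ≤ √q for every ν. -/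
open Polynomial Finset

private lemma aux_pow_le {r s C : ℝ} (_hr : 0 < r) (hs : 0 < s) (N : ℕ)
    (h : ∀ n, N ≤ n → r ^ n ≤ C * s ^ n) : r ≤ s := by
  by_contra hc
  push_neg at hc
  have ht : 1 < r / s := (one_lt_div hs).2 hc
  obtain ⟨n, hn2, hn1⟩ := (((tendsto_pow_atTop_atTop_of_one_lt ht).eventually_gt_atTop C).and
    (Filter.eventually_ge_atTop N)).exists
  have h1 := h n hn1
  have h2 : (r / s) ^ n ≤ C := by
    rw [div_pow, div_le_iff₀ (pow_pos hs n)]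
    exact h1
  linarith

private lemma key_lemma {k : ℕ} (ω : Fin k → ℂ) (B s : ℝ) (hs : 0 < s) (N₀ : ℕ)
    (hb : ∀ n, N₀ ≤ n → ‖∑ ν', ω ν' ^ n‖ ≤ B * s ^ n)
    (ν : Fin k) (hν : ω ν ≠ 0) : ‖ω ν‖ ≤ s := by
  classical
  set T : Finset ℂ := Finset.image ω Finset.univ with hT
  set l0 : ℂ := ω ν with hl0
  have hl0T : l0 ∈ T := Finset.mem_image_of_mem ω (Finset.mem_univ ν)
  set p : Polynomial ℂ := ∏ μ ∈ T.erase l0, (X - C μ) with hp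
  set mfun : ℂ → ℕ := fun μ => (Finset.univ.filter (fun ν' => ω ν' = μ)).card with hmfun
  have hpl0 : p.eval l0 ≠ 0 := by
    rw [hp, eval_prod]
    refine Finset.prod_ne_zero_iff.2 fun μ hμ => ?_
    have : μ ≠ l0 := (Finset.mem_erase.1 hμ).1
    simp [sub_ne_zero, this.symm]
  have hpμ : ∀ μ ∈ T, μ ≠ l0 → p.eval μ = 0 := by
    intro μ hμ hne
    rw [hp, eval_prod]
    exact Finset.prod_eq_zero (Finset.mem_erase.2 ⟨hne, hμ⟩) (by simp)
  have hm : 0 < mfun l0 := by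
    refine Finset.card_pos.2 ⟨ν, ?_⟩
    simp [hmfun, hl0]
  -- fiberwise decomposition of the power sums
  have hfib : ∀ N : ℕ, ∑ ν', ω ν' ^ N = ∑ μ ∈ T, (mfun μ : ℂ) * μ ^ N := by
    intro N
    rw [← Finset.sum_fiberwise_of_maps_to'
      (fun i _ => Finset.mem_image_of_mem ω (Finset.mem_univ i)) (fun μ => μ ^ N)]
    exact Finset.sum_congr rfl fun μ _ => by rw [Finset.sum_const, nsmul_eq_mul]
  have step : ∀ (n : ℕ) (μ : ℂ),
      ∑ i ∈ Finset.range (p.natDegree + 1), p.coeff i * μ ^ (n + i)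
        = μ ^ n * p.eval μ := by
    intro n μ
    rw [Polynomial.eval_eq_sum_range, Finset.mul_sum]
    refine Finset.sum_congr rfl fun i _ => ?_
    rw [pow_add]; ring
  -- the key identity
  have hiden : ∀ n : ℕ,
      ∑ i ∈ Finset.range (p.natDegree + 1), p.coeff i * (∑ ν', ω ν' ^ (n + i))
        = (mfun l0 : ℂ) * (l0 ^ n * p.eval l0) := by
    intro n
    simp_rw [hfib, Finset.mul_sum]
    rw [Finset.sum_comm]
    have h1 : ∀ μ ∈ T,
        ∑ i ∈ Finset.range (p.natDegree + 1), p.coeff i * ((mfun μ : ℂ) * μ ^ (n + i))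
          = (mfun μ : ℂ) * (μ ^ n * p.eval μ) := by
      intro μ _
      rw [← step n μ, Finset.mul_sum]
      exact Finset.sum_congr rfl fun i _ => by ring
    rw [Finset.sum_congr rfl h1]
    refine Finset.sum_eq_single l0 (fun μ hμ hne => ?_) (fun h => absurd hl0T h)
    rw [hpμ μ hμ hne, mul_zero, mul_zero]
  -- bound
  set d : ℕ := p.natDegree with hd
  set A : ℝ := ∑ i ∈ Finset.range (d + 1), ‖p.coeff i‖ * B * s ^ i with hA
  set mc : ℝ := (mfun l0 : ℝ) * ‖p.eval l0‖ with hmc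
  have hmcpos : 0 < mc := by
    apply mul_pos
    · exact_mod_cast hm
    · exact norm_pos_iff.2 hpl0
  refine aux_pow_le (norm_pos_iff.2 hν) hs N₀ (C := A / mc) fun n hn => ?_
  have hbd : mc * ‖ω ν‖ ^ n ≤ A * s ^ n := by
    have e1 : mc * ‖ω ν‖ ^ n
        = ‖∑ i ∈ Finset.range (d + 1), p.coeff i * (∑ ν', ω ν' ^ (n + i))‖ := by
      rw [hiden n, norm_mul, norm_mul, norm_pow, Complex.norm_natCast, ← hl0]
      ring
    rw [e1]
    calc ‖∑ i ∈ Finset.range (d + 1), p.coeff i * (∑ ν', ω ν' ^ (n + i))‖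
        ≤ ∑ i ∈ Finset.range (d + 1), ‖p.coeff i * (∑ ν', ω ν' ^ (n + i))‖ :=
          norm_sum_le _ _
      _ ≤ ∑ i ∈ Finset.range (d + 1),
            ‖p.coeff i‖ * (B * s ^ (n + i)) := by
          refine Finset.sum_le_sum fun i _ => ?_
          rw [norm_mul]
          exact mul_le_mul_of_nonneg_left (hb (n + i) (hn.trans (Nat.le_add_right n i)))
            (norm_nonneg _)
      _ = A * s ^ n := by
          rw [hA, Finset.sum_mul]
          refine Finset.sum_congr rfl fun i _ => ?_
          rw [pow_add]; ring
  rw [div_mul_eq_mul_div, le_div_iff₀ hmcpos]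
  calc ‖ω ν‖ ^ n * mc = mc * ‖ω ν‖ ^ n := by ring
    _ ≤ A * s ^ n := hbd

/-- The key step of Lemma 3.1: if `ω_1, …, ω_{2g}` are nonzero complex numbers such that
for every `ε > 0`, `|∑_ν ω_ν^n| ≤ B q^{n(1/2+ε)}` for all sufficiently large `n`, then
`|ω_ν| ≤ √q` for every `ν`. -/
theorem stmt6 (g : ℕ) (q : ℝ) (hq : 0 < q) (ω : Fin (2 * g) → ℂ)
    (hω : ∀ ν, ω ν ≠ 0) (B : ℝ)
    (hbound : ∀ ε : ℝ, 0 < ε → ∃ N₀ : ℕ, ∀ n : ℕ, N₀ ≤ n →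
      ‖∑ ν, ω ν ^ n‖ ≤ B * q ^ ((n : ℝ) * (1 / 2 + ε))) :
    ∀ ν, ‖ω ν‖ ≤ Real.sqrt q := by
  intro ν
  have key : ∀ ε : ℝ, 0 < ε → ‖ω ν‖ ≤ q ^ ((1 : ℝ) / 2 + ε) := by
    intro ε hε
    obtain ⟨N₀, hN₀⟩ := hbound ε hε
    have hs : 0 < q ^ ((1 : ℝ) / 2 + ε) := Real.rpow_pos_of_pos hq _
    refine key_lemma ω B _ hs N₀ (fun n hn => ?_) ν (hω ν)
    have := hN₀ n hn
    rwa [mul_comm ((n : ℝ)) _, Real.rpow_mul hq.le, Real.rpow_natCast] at this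
  -- pass to the limit ε → 0
  by_contra hc
  push_neg at hc
  have hcont : ContinuousAt (fun ε : ℝ => q ^ ((1 : ℝ) / 2 + ε)) 0 :=
    (Real.continuousAt_const_rpow hq.ne').comp (continuousAt_const.add continuousAt_id)
  have hev : ∀ᶠ ε : ℝ in nhds 0, q ^ ((1 : ℝ) / 2 + ε) < ‖ω ν‖ := by
    have h1 := hcont.tendsto
    rw [add_zero] at h1
    rw [Real.sqrt_eq_rpow] at hc
    exact h1.eventually_lt_const hc
  rw [Metric.eventually_nhds_iff] at hev
  obtain ⟨δ, hδ, hδ'⟩ := hev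
  have h2 := hδ' (y := δ / 2) (by rw [Real.dist_eq]; rw [sub_zero]; rw [abs_of_pos (by linarith)]; linarith)
  have h3 := key (δ / 2) (by linarith)
  linarith
end

section
/- Given nonzero complex numbers ω_1, …, ω_k, there exist infinitely many positive integers n such that Re(ω_ν^n) ≥ |ω_ν|^n / 2 for every ν = 1, …, k. -/
open MeasureTheory Filter

lemma cos_bound {x : ℝ} (h : ‖(x : AddCircle (1:ℝ))‖ ≤ 1/6) :
    1/2 ≤ Real.cos (2 * Real.pi * x) := by
  rw [AddCircle.norm_eq] at h
  simp only [inv_one, one_mul, mul_one] at h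
  set m := round x with hm
  have : Real.cos (2 * Real.pi * x) = Real.cos (2 * Real.pi * (x - m)) := by
    rw [show 2 * Real.pi * x = 2 * Real.pi * (x - m) + m * (2 * Real.pi) by ring,
      Real.cos_add_int_mul_two_pi]
  rw [this, ← Real.cos_abs]
  have hle : |2 * Real.pi * (x - m)| ≤ Real.pi / 3 := by
    rw [abs_mul]
    have : |2 * Real.pi| = 2 * Real.pi := abs_of_pos (by positivity)
    rw [this]
    nlinarith [Real.pi_pos]
  calc (1:ℝ)/2 = Real.cos (Real.pi / 3) := (Real.cos_pi_div_three).symm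
    _ ≤ Real.cos |2 * Real.pi * (x - m)| :=
        Real.cos_le_cos_of_nonneg_of_le_pi (abs_nonneg _)
          (by linarith [Real.pi_pos]) hle

lemma recur (k : ℕ) (θ : Fin k → ℝ) :
    {n : ℕ | 0 < n ∧ ∀ ν, ‖(((n : ℝ) * θ ν : ℝ) : AddCircle (1:ℝ))‖ ≤ 1/6}.Infinite := by
  set θ' : Fin k → AddCircle (1:ℝ) := fun ν => ((θ ν : ℝ) : AddCircle (1:ℝ)) with hθ'
  set s : Set (Fin k → AddCircle (1:ℝ)) := {x | ∀ ν, ‖x ν‖ < 1/12} with hs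
  have hso : IsOpen s := by
    have : s = ⋂ ν, (fun x : Fin k → AddCircle (1:ℝ) => x ν) ⁻¹' Metric.ball 0 (1/12) := by
      ext x; simp [hs, mem_ball_zero_iff]
    rw [this]
    exact isOpen_iInter_of_finite fun ν => Metric.isOpen_ball.preimage (continuous_apply ν)
  have hs0 : (0 : Fin k → AddCircle (1:ℝ)) ∈ s := by simp [hs]
  have hsne : volume s ≠ 0 := (hso.measure_ne_zero volume ⟨_, hs0⟩)
  have hmp : MeasurePreserving (fun x : Fin k → AddCircle (1:ℝ) => x + θ') volume volume :=
    measurePreserving_add_right volume θ'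
  have hcons := hmp.conservative
  obtain ⟨x, hxmem, hxfreq⟩ :=
    (hcons.frequently_ae_mem_and_frequently_image_mem hso.nullMeasurableSet hsne).exists
  have hiter : ∀ n : ℕ, (fun x : Fin k → AddCircle (1:ℝ) => x + θ')^[n] x = x + n • θ' := by
    intro n
    induction n with
    | zero => simp
    | succ n ih => rw [Function.iterate_succ_apply', ih, succ_nsmul]; abel
  have hfreq : ∃ᶠ n : ℕ in atTop, ∀ ν, ‖(((n : ℝ) * θ ν : ℝ) : AddCircle (1:ℝ))‖ ≤ 1/6 := by
    refine hxfreq.mono fun n hn ν => ?_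
    rw [hiter n] at hn
    have h1 : ‖(x + n • θ') ν‖ < 1/12 := hn ν
    have h2 : ‖x ν‖ < 1/12 := hxmem ν
    have h3 : (((n : ℝ) * θ ν : ℝ) : AddCircle (1:ℝ)) = (x + n • θ') ν - x ν := by
      simp only [hθ', Pi.add_apply, Pi.smul_apply, add_sub_cancel_left]
      rw [← AddCircle.coe_nsmul, nsmul_eq_mul]
    rw [h3]
    calc ‖(x + n • θ') ν - x ν‖ ≤ ‖(x + n • θ') ν‖ + ‖x ν‖ := norm_sub_le _ _
      _ ≤ 1/6 := by linarith
  have hinf : {n : ℕ | ∀ ν, ‖(((n : ℝ) * θ ν : ℝ) : AddCircle (1:ℝ))‖ ≤ 1/6}.Infinite :=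
    Nat.frequently_atTop_iff_infinite.mp hfreq
  have : {n : ℕ | 0 < n ∧ ∀ ν, ‖(((n : ℝ) * θ ν : ℝ) : AddCircle (1:ℝ))‖ ≤ 1/6} ⊇
      {n : ℕ | ∀ ν, ‖(((n : ℝ) * θ ν : ℝ) : AddCircle (1:ℝ))‖ ≤ 1/6} \ {0} := by
    rintro n ⟨hn, hn0⟩
    exact ⟨Nat.pos_of_ne_zero hn0, hn⟩
  exact (hinf.diff (Set.finite_singleton 0)).mono this

/-- Simultaneous Diophantine approximation: given nonzero complex numbers
`ω_1, …, ω_k`, there are infinitely many positive integers `n` with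
`Re(ω_ν^n) ≥ |ω_ν|^n / 2` for every `ν`. -/
theorem stmt7 (k : ℕ) (ω : Fin k → ℂ) (hω : ∀ ν, ω ν ≠ 0) :
    {n : ℕ | 0 < n ∧ ∀ ν, ‖ω ν‖ ^ n / 2 ≤ (ω ν ^ n).re}.Infinite := by
  have hinf := recur k (fun ν => Complex.arg (ω ν) / (2 * Real.pi))
  refine hinf.mono ?_
  rintro n ⟨hn, hcond⟩
  refine ⟨hn, fun ν => ?_⟩
  have hθ : (n : ℝ) * (Complex.arg (ω ν) / (2 * Real.pi)) =
      (n * Complex.arg (ω ν)) / (2 * Real.pi) := by ring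
  have hcos : (1:ℝ)/2 ≤ Real.cos ((n : ℝ) * Complex.arg (ω ν)) := by
    have := cos_bound (hcond ν)
    rwa [hθ, mul_div_cancel₀ _ (by positivity : (2 * Real.pi : ℝ) ≠ 0)] at this
  have hre : (ω ν ^ n).re = ‖ω ν‖ ^ n * Real.cos ((n : ℝ) * Complex.arg (ω ν)) := by
    conv_lhs => rw [← Complex.norm_mul_exp_arg_mul_I (ω ν)]
    rw [mul_pow, ← Complex.exp_nat_mul]
    rw [show (n : ℂ) * ((Complex.arg (ω ν) : ℂ) * Complex.I) =
        (((n : ℝ) * Complex.arg (ω ν) : ℝ) : ℂ) * Complex.I by push_cast; ring,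
      ← Complex.ofReal_pow]
    simp only [Complex.mul_re, Complex.exp_ofReal_mul_I_re, Complex.exp_ofReal_mul_I_im,
      Complex.ofReal_re, Complex.ofReal_im, zero_mul, mul_zero, sub_zero]
  rw [hre]
  have habs : (0:ℝ) ≤ ‖ω ν‖ ^ n := by positivity
  nlinarith
end

section
/- Let C be a smooth projective curve of genus g over 𝔽_q with ∞ ∈ C(𝔽_q), and suppose there exists a nonzero function h on C, defined over 𝔽_{q^{1/2}}-algebraic closure, which is a p^μ-th power, has its only pole at ∞ of order at most p^μ n + q m, and vanishes at every point of C(𝔽_q) other than ∞. If p^μ n < q, then |C(𝔽_q)| ≤ 1 + n + (q/p^μ) m. -/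
/-- The zero/pole count giving inequality (3.4): suppose `h` is a nonzero function on `C`
(represented by its principal divisor `D`) which is a `p^μ`-th power, has its only pole
at the rational point `∞`, of order at most `p^μ n + q m` (so it vanishes to order at
least `p^μ` at every `𝔽_q`-rational point other than `∞` at which it vanishes; here it is
assumed to vanish at all of them).  If `p^μ n < q` then
`|C(𝔽_q)| ≤ 1 + n + (q/p^μ) m`. -/
theorem stmt16 (p μ q n m : ℕ) (hp : p.Prime)
    (C : SmoothProjCurve q) (infty : C.Point) (hinf : C.deg infty = 1)
    (D : C.Point →₀ ℤ) (hD : D ∈ C.prin)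
    (hvan : ∀ v : C.Point, v ≠ infty → C.deg v = 1 → ((p : ℤ) ^ μ ≤ D v))
    (hreg : ∀ v : C.Point, v ≠ infty → 0 ≤ D v)
    (hpole : -(((p : ℤ) ^ μ) * n + (q : ℤ) * m) ≤ D infty)
    (hlt : p ^ μ * n < q) :
    (Nat.card {v : C.Point // C.deg v = 1} : ℝ) ≤
      1 + (n : ℝ) + ((q : ℝ) / (p : ℝ) ^ μ) * m := by

  classical
  have hfin := C.finite_deg 1
  set s : Finset C.Point := hfin.toFinset with hs
  have hmem : ∀ v, v ∈ s ↔ C.deg v = 1 := by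
    intro v; simp [hs, Set.Finite.mem_toFinset]
  have hcard : Nat.card {v : C.Point // C.deg v = 1} = s.card := by
    rw [show {v : C.Point // C.deg v = 1} = ↥{v : C.Point | C.deg v = 1} from rfl,
      Nat.card_coe_set_eq, Set.ncard_eq_toFinset_card _ hfin]
  -- big finset containing support, s, infty
  set t : Finset C.Point := D.support ∪ s ∪ {infty} with ht
  have hsum : D.sum (fun v k => k * (C.deg v : ℤ)) = ∑ v ∈ t, D v * (C.deg v : ℤ) := by
    apply Finsupp.sum_of_support_subset
    · intro v hv; exact Finset.mem_union_left _ (Finset.mem_union_left _ hv)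
    · intro v _; simp
  have hdeg0 : ∑ v ∈ t, D v * (C.deg v : ℤ) = 0 := by
    rw [← hsum]; exact C.deg_prin D hD
  have hit : infty ∈ t := by simp [ht]
  have hsplit : ∑ v ∈ t, D v * (C.deg v : ℤ)
      = D infty * (C.deg infty : ℤ) + ∑ v ∈ t.erase infty, D v * (C.deg v : ℤ) :=
    (Finset.add_sum_erase _ _ hit).symm
  -- lower bound the erased sum
  have hbound : ((p : ℤ) ^ μ) * ((s.erase infty).card : ℤ)
      ≤ ∑ v ∈ t.erase infty, D v * (C.deg v : ℤ) := by
    have hsub : s.erase infty ⊆ t.erase infty := by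
      intro v hv
      rcases Finset.mem_erase.mp hv with ⟨h1, h2⟩
      exact Finset.mem_erase.mpr ⟨h1, by simp [ht]; tauto⟩
    calc ((p : ℤ) ^ μ) * ((s.erase infty).card : ℤ)
        = ∑ v ∈ s.erase infty, (p : ℤ) ^ μ := by
          rw [Finset.sum_const, nsmul_eq_mul, mul_comm]
      _ ≤ ∑ v ∈ s.erase infty, D v * (C.deg v : ℤ) := by
          apply Finset.sum_le_sum
          intro v hv
          rcases Finset.mem_erase.mp hv with ⟨h1, h2⟩
          have hd : C.deg v = 1 := (hmem v).mp h2
          have := hvan v h1 hd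
          rw [hd]; simpa using this
      _ ≤ ∑ v ∈ t.erase infty, D v * (C.deg v : ℤ) := by
          apply Finset.sum_le_sum_of_subset_of_nonneg hsub
          intro v hv _
          rcases Finset.mem_erase.mp hv with ⟨h1, _⟩
          exact mul_nonneg (hreg v h1) (by positivity)
  have hkey : ((p : ℤ) ^ μ) * ((s.erase infty).card : ℤ)
      ≤ ((p : ℤ) ^ μ) * n + (q : ℤ) * m := by
    have h1 : D infty * (C.deg infty : ℤ) + ((p : ℤ) ^ μ) * ((s.erase infty).card : ℤ) ≤ 0 := by
      rw [← hdeg0, hsplit]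
      exact add_le_add le_rfl hbound
    rw [hinf] at h1
    simp only [Nat.cast_one, mul_one] at h1
    linarith
  -- move to reals
  have hppos : (0 : ℝ) < (p : ℝ) ^ μ := by
    have := hp.pos; positivity
  have hkeyR : ((p : ℝ) ^ μ) * ((s.erase infty).card : ℝ)
      ≤ ((p : ℝ) ^ μ) * n + (q : ℝ) * m := by exact_mod_cast hkey
  have hcard2 : (s.card : ℝ) ≤ ((s.erase infty).card : ℝ) + 1 := by
    have := Finset.card_erase_add_one (s := s) (a := infty)
    by_cases h : infty ∈ s
    · have := Finset.card_erase_add_one h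
      exact_mod_cast by omega
    · have : s.erase infty = s := Finset.erase_eq_of_notMem h
      rw [this]; linarith
  have hdiv : ((s.erase infty).card : ℝ) ≤ (n : ℝ) + ((q : ℝ) / (p : ℝ) ^ μ) * m := by
    have h1 : ((s.erase infty).card : ℝ) ≤ ((p:ℝ)^μ * n + (q:ℝ) * m) / (p:ℝ)^μ := by
      rw [le_div_iff₀ hppos]; nlinarith [hkeyR]
    have h2 : ((p:ℝ)^μ * n + (q:ℝ) * m) / (p:ℝ)^μ = (n : ℝ) + ((q : ℝ) / (p : ℝ) ^ μ) * m := by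
      field_simp
    linarith [h1, h2.le, h2.ge]
  rw [hcard]
  push_cast
  linarith
end
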